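/- Let h : ℝⁿ → ℝ be Lipschitz with constant C. Then lim_{t→0⁺} ∫_{ℝⁿ} (|x−y|²/(4t) − n/2) · e^{−|x−y|²/(4t)}/(4πt)^{n/2} · (h(y) − h(x)) dy = 0 for every x ∈ ℝⁿ. -/

import Mathlib

open MeasureTheory Real

lemma gauss_int (n : ℕ) {b : ℝ} (hb : 0 < b) :
    Integrable (fun v : EuclideanSpace ℝ (Fin n) => Real.exp (-b * ‖v‖ ^ 2)) := by
  have h := (GaussianFourier.integrable_cexp_neg_mul_sq_norm_add (V := EuclideanSpace ℝ (Fin n))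
      (b := (b : ℂ)) (by simpa using hb) 0 0).norm
  simpa [Complex.norm_exp, neg_mul, ← Complex.ofReal_pow, Complex.ofReal_re] using h

lemma poly_gauss_int (n : ℕ) :
    Integrable (fun z : EuclideanSpace ℝ (Fin n) =>
      (‖z‖ ^ 2 + (n : ℝ) / 2) * Real.exp (-‖z‖ ^ 2) * ‖z‖) := by
  apply Integrable.mono' ((gauss_int n (by norm_num : (0:ℝ) < 1/2)).const_mul
    (16 * (1 + (n : ℝ) / 2)))
  · exact (Continuous.aestronglyMeasurable (by continuity))
  · filter_upwards with z
    set r := ‖z‖ with hr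
    have hr0 : 0 ≤ r := norm_nonneg _
    have hn : 0 ≤ (n : ℝ) / 2 := by positivity
    have he : 1 + r ^ 2 / 4 ≤ Real.exp (r ^ 2 / 4) := by
      have := Real.add_one_le_exp (r ^ 2 / 4); linarith
    have he0 : (0:ℝ) < Real.exp (r ^ 2 / 4) := Real.exp_pos _
    have h4 : 1 + r ^ 2 ≤ 4 * Real.exp (r ^ 2 / 4) := by nlinarith
    have key : (r ^ 2 + (n : ℝ) / 2) * r ≤
        16 * (1 + (n : ℝ) / 2) * Real.exp (r ^ 2 / 2) := by
      have hee : Real.exp (r ^ 2 / 2) = Real.exp (r ^ 2 / 4) * Real.exp (r ^ 2 / 4) := by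
        rw [← Real.exp_add]; ring_nf
      have hrle : r ≤ 1 + r ^ 2 := by nlinarith [sq_nonneg (r - 1)]
      calc (r ^ 2 + (n : ℝ) / 2) * r ≤ (r ^ 2 + (n : ℝ) / 2) * (1 + r ^ 2) := by
            apply mul_le_mul_of_nonneg_left hrle (by positivity)
        _ ≤ (1 + (n : ℝ) / 2) * ((1 + r ^ 2) * (1 + r ^ 2)) := by
            have h5 : r ^ 2 + (n : ℝ) / 2 ≤ (1 + (n : ℝ) / 2) * (1 + r ^ 2) := by nlinarith [mul_nonneg hn (sq_nonneg r)]
            nlinarith [mul_le_mul_of_nonneg_right h5 (by positivity : (0:ℝ) ≤ 1 + r ^ 2)]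
        _ ≤ (1 + (n : ℝ) / 2) * ((4 * Real.exp (r ^ 2 / 4)) * (4 * Real.exp (r ^ 2 / 4))) := by
            apply mul_le_mul_of_nonneg_left _ (by positivity)
            apply mul_le_mul h4 h4 (by positivity) (by positivity)
        _ = 16 * (1 + (n : ℝ) / 2) * Real.exp (r ^ 2 / 2) := by rw [hee]; ring
    have hnorm : ‖(r ^ 2 + (n : ℝ) / 2) * Real.exp (-r ^ 2) * r‖ =
        (r ^ 2 + (n : ℝ) / 2) * Real.exp (-r ^ 2) * r := by
      rw [Real.norm_eq_abs, abs_of_nonneg (by positivity)]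
    rw [hnorm]
    have hsplit : Real.exp (-r ^ 2) = Real.exp (-((1:ℝ)/2) * r ^ 2) * Real.exp (-(r ^ 2 / 2)) := by
      rw [← Real.exp_add]; ring_nf
    calc (r ^ 2 + (n : ℝ) / 2) * Real.exp (-r ^ 2) * r
        = ((r ^ 2 + (n : ℝ) / 2) * r) * (Real.exp (-((1:ℝ)/2) * r ^ 2) * Real.exp (-(r ^ 2 / 2))) := by
          rw [← hsplit]; ring
      _ ≤ (16 * (1 + (n : ℝ) / 2) * Real.exp (r ^ 2 / 2)) * (Real.exp (-((1:ℝ)/2) * r ^ 2) * Real.exp (-(r ^ 2 / 2))) := by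
          apply mul_le_mul_of_nonneg_right key (by positivity)
      _ = 16 * (1 + (n : ℝ) / 2) * Real.exp (-((1:ℝ)/2) * r ^ 2) := by
          rw [mul_comm (Real.exp (-((1:ℝ)/2) * r ^ 2)), ← mul_assoc, mul_assoc _ (Real.exp (r^2/2)), ← Real.exp_add]
          simp
      _ = 16 * (1 + (n : ℝ) / 2) * Real.exp (-(1/2 : ℝ) * ‖z‖ ^ 2) := by rw [hr]

theorem kernel_pairing_lipschitz_vanishes (n : ℕ) (C : NNReal)
    (h : EuclideanSpace ℝ (Fin n) → ℝ) (hh : LipschitzWith C h)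
    (x : EuclideanSpace ℝ (Fin n)) :
    Filter.Tendsto (fun t : ℝ =>
      ∫ y : EuclideanSpace ℝ (Fin n),
        (‖x - y‖ ^ 2 / (4 * t) - (n : ℝ) / 2) *
          (Real.exp (-‖x - y‖ ^ 2 / (4 * t)) / (4 * Real.pi * t) ^ ((n : ℝ) / 2)) *
          (h y - h x))
      (nhdsWithin 0 (Set.Ioi 0)) (nhds 0) := by
  set I : ℝ := ∫ z : EuclideanSpace ℝ (Fin n),
    (‖z‖ ^ 2 + (n : ℝ) / 2) * Real.exp (-‖z‖ ^ 2) * ‖z‖ with hIdef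
  set K : ℝ := (C : ℝ) * (Real.pi ^ (-((n : ℝ) / 2)) * 2 * I) with hKdef
  apply squeeze_zero_norm' (a := fun t : ℝ => K * Real.sqrt t)
  · filter_upwards [self_mem_nhdsWithin] with t ht
    replace ht : 0 < t := ht
    have ht' : t ≠ 0 := ht.ne'
    set c : ℝ := 2 * Real.sqrt t with hcdef
    have hst : Real.sqrt t ^ 2 = t := Real.sq_sqrt ht.le
    have hc : 0 < c := by rw [hcdef]; positivity
    have hc2 : c ^ 2 = 4 * t := by rw [hcdef]; nlinarith [hst]
    have hP : (0:ℝ) < (4 * Real.pi * t) ^ ((n : ℝ) / 2) := by positivity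
    set D : ℝ := (4 * Real.pi * t) ^ ((n : ℝ) / 2) with hDdef
    set f : EuclideanSpace ℝ (Fin n) → ℝ := fun z =>
      ((C : ℝ) * c / D) * ((‖z‖ ^ 2 + (n : ℝ) / 2) * Real.exp (-‖z‖ ^ 2) * ‖z‖) with hfdef
    have hfint : Integrable f := (poly_gauss_int n).const_mul _
    set G : EuclideanSpace ℝ (Fin n) → ℝ := fun w => f (c⁻¹ • w) with hGdef
    have hGint : Integrable G := hfint.comp_smul (inv_ne_zero hc.ne')
    have hGyint : Integrable (fun y => G (x - y)) := hGint.comp_sub_left x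
    have hGw : ∀ w : EuclideanSpace ℝ (Fin n), G w =
        (‖w‖ ^ 2 / (4 * t) + (n : ℝ) / 2) * (Real.exp (-‖w‖ ^ 2 / (4 * t)) / D) *
          ((C : ℝ) * ‖w‖) := by
      intro w
      have hnw : ‖c⁻¹ • w‖ = c⁻¹ * ‖w‖ := by
        rw [norm_smul, Real.norm_eq_abs, abs_of_pos (inv_pos.2 hc)]
      have hsq : ‖c⁻¹ • w‖ ^ 2 = ‖w‖ ^ 2 / (4 * t) := by
        rw [hnw, mul_pow, inv_pow, ← hc2]
        field_simp
      simp only [hGdef, hfdef]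
      rw [hsq, hnw, neg_div]
      generalize Real.exp (-(‖w‖ ^ 2 / (4 * t))) = A
      have hc' : c ≠ 0 := hc.ne'
      have hD' : D ≠ 0 := hP.ne'
      field_simp
    have hbd : ∀ y : EuclideanSpace ℝ (Fin n),
        ‖(‖x - y‖ ^ 2 / (4 * t) - (n : ℝ) / 2) *
          (Real.exp (-‖x - y‖ ^ 2 / (4 * t)) / D) * (h y - h x)‖ ≤ G (x - y) := by
      intro y
      rw [hGw, norm_sub_rev x y]
      rw [Real.norm_eq_abs, abs_mul, abs_mul]
      rw [norm_sub_rev y x]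
      have ha : (0:ℝ) ≤ ‖x - y‖ ^ 2 / (4 * t) := by positivity
      have hb : (0:ℝ) ≤ (n : ℝ) / 2 := by positivity
      have h1 : |‖x - y‖ ^ 2 / (4 * t) - (n : ℝ) / 2| ≤
          ‖x - y‖ ^ 2 / (4 * t) + (n : ℝ) / 2 :=
        abs_le.mpr ⟨by linarith, by linarith⟩
      have h2 : |Real.exp (-‖x - y‖ ^ 2 / (4 * t)) / D| =
          Real.exp (-‖x - y‖ ^ 2 / (4 * t)) / D := abs_of_nonneg (by positivity)
      have h3 : |h y - h x| ≤ (C : ℝ) * ‖x - y‖ := by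
        have h4 := hh.dist_le_mul y x
        rwa [Real.dist_eq, dist_eq_norm, norm_sub_rev] at h4
      rw [h2]
      exact mul_le_mul (mul_le_mul_of_nonneg_right h1 (by positivity)) h3 (abs_nonneg _)
        (by positivity)
    have hval : (∫ y : EuclideanSpace ℝ (Fin n), G (x - y)) = K * Real.sqrt t := by
      rw [integral_sub_left_eq_self G volume x]
      have h5 : (∫ w, G w) = (c ^ n : ℝ) • ∫ z, f z := by
        rw [hGdef]
        rw [MeasureTheory.Measure.integral_comp_inv_smul_of_nonneg volume f hc.le,
          finrank_euclideanSpace_fin]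
      have h6 : (∫ z, f z) = ((C : ℝ) * c / D) * I := by
        rw [hfdef, hIdef]
        exact integral_const_mul _ _
      rw [h5, h6, smul_eq_mul]
      have hcn : (c : ℝ) ^ n = (4 * t) ^ ((n : ℝ) / 2) := by
        rw [← hc2, ← Real.rpow_natCast c n, ← Real.rpow_natCast c 2, ← Real.rpow_mul hc.le]
        congr 1
        push_cast
        ring
      have hquot : (4 * t) ^ ((n : ℝ) / 2) / D = Real.pi ^ (-((n : ℝ) / 2)) := by
        rw [hDdef, ← Real.div_rpow (by positivity) (by positivity)]
        have h7 : 4 * t / (4 * Real.pi * t) = Real.pi⁻¹ := by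
          field_simp
        rw [h7, ← Real.rpow_neg_one, ← Real.rpow_mul Real.pi_pos.le]
        congr 1
        ring
      calc c ^ n * ((C : ℝ) * c / D * I)
          = ((4 * t) ^ ((n : ℝ) / 2) / D) * ((C : ℝ) * c * I) := by rw [hcn]; ring
        _ = Real.pi ^ (-((n : ℝ) / 2)) * ((C : ℝ) * (2 * Real.sqrt t) * I) := by
            rw [hquot, hcdef]
        _ = K * Real.sqrt t := by rw [hKdef]; ring
    calc ‖∫ y : EuclideanSpace ℝ (Fin n),
          (‖x - y‖ ^ 2 / (4 * t) - (n : ℝ) / 2) *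
            (Real.exp (-‖x - y‖ ^ 2 / (4 * t)) / D) * (h y - h x)‖
        ≤ ∫ y : EuclideanSpace ℝ (Fin n), ‖(‖x - y‖ ^ 2 / (4 * t) - (n : ℝ) / 2) *
            (Real.exp (-‖x - y‖ ^ 2 / (4 * t)) / D) * (h y - h x)‖ :=
          norm_integral_le_integral_norm _
      _ ≤ ∫ y : EuclideanSpace ℝ (Fin n), G (x - y) :=
          integral_mono_of_nonneg (Filter.Eventually.of_forall fun y => norm_nonneg _) hGyint
            (Filter.Eventually.of_forall hbd)
      _ = K * Real.sqrt t := hval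
  · have h8 : Filter.Tendsto (fun t : ℝ => K * Real.sqrt t) (nhds 0)
        (nhds (K * Real.sqrt 0)) := (Real.continuous_sqrt.tendsto 0).const_mul K
    simpa using h8.mono_left nhdsWithin_le_nhds
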